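/- Let U be an open, convex, bounded neighbourhood of 0 in a real Banach space X with Minkowski functional μ, let k(x) = μ(x)/(1−μ(x)) on U, and define k̄ : X → ℝ ∪ {+∞} by k̄(x) = k(x) for x ∈ U and k̄(x) = +∞ otherwise. Then k̄ is convex and lower semicontinuous on X. -/

import Mathlib

open scoped Classical Pointwise

/-- monotonicity of `t ↦ t/(1-t)` on `[0,1)`. -/
lemma aux_mono {u v : ℝ} (huv : u ≤ v) (hv : v < 1) :
    u / (1 - u) ≤ v / (1 - v) := by
  have h1 : 0 < 1 - v := by linarith
  have h2 : 0 < 1 - u := by linarith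
  rw [div_le_div_iff₀ h2 h1]
  nlinarith

lemma aux_strict_mono {u v : ℝ} (huv : u < v) (hv : v < 1) :
    u / (1 - u) < v / (1 - v) := by
  have h1 : 0 < 1 - v := by linarith
  have h2 : 0 < 1 - u := by linarith
  rw [div_lt_div_iff₀ h2 h1]
  nlinarith

lemma aux_lt_one {a b s t : ℝ} (ha : 0 ≤ a) (hb : 0 ≤ b) (hab : a + b = 1)
    (hs1 : s < 1) (ht1 : t < 1) : a * s + b * t < 1 := by
  have hM : max s t < 1 := max_lt hs1 ht1
  calc a * s + b * t ≤ a * max s t + b * max s t :=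
        add_le_add (mul_le_mul_of_nonneg_left (le_max_left _ _) ha)
          (mul_le_mul_of_nonneg_left (le_max_right _ _) hb)
    _ = max s t := by rw [← add_mul, hab, one_mul]
    _ < 1 := hM

/-- convexity of `t ↦ t/(1-t)` on `[0,1)`. -/
lemma aux_convex {a b s t : ℝ} (ha : 0 ≤ a) (hb : 0 ≤ b) (hab : a + b = 1)
    (hs1 : s < 1) (ht1 : t < 1) :
    (a * s + b * t) / (1 - (a * s + b * t)) ≤ a * (s / (1 - s)) + b * (t / (1 - t)) := by
  have hds : 0 < 1 - s := by linarith
  have hdt : 0 < 1 - t := by linarith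
  have hst : a * s + b * t < 1 := aux_lt_one ha hb hab hs1 ht1
  have hd : 0 < 1 - (a * s + b * t) := by linarith
  rw [mul_div_assoc' a s, mul_div_assoc' b t, div_add_div _ _ (ne_of_gt hds) (ne_of_gt hdt),
    div_le_div_iff₀ hd (mul_pos hds hdt)]
  have hb' : b = 1 - a := by linarith
  subst hb'
  nlinarith [mul_nonneg (mul_nonneg ha hb) (sq_nonneg (s - t))]

theorem barrier_extension_convex_lsc {X : Type*} [NormedAddCommGroup X] [NormedSpace ℝ X]
    (U : Set X) (hU : IsOpen U) (hconv : Convex ℝ U) (hbdd : Bornology.IsBounded U)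
    (h0 : (0:X) ∈ U)
    (kbar : X → EReal)
    (hkbar : ∀ x, kbar x = if x ∈ U then ((gauge U x / (1 - gauge U x) : ℝ) : EReal) else ⊤) :
    LowerSemicontinuous kbar ∧
    (∀ x y : X, ∀ a b : ℝ, 0 ≤ a → 0 ≤ b → a + b = 1 →
      kbar (a • x + b • y) ≤ (a : EReal) * kbar x + (b : EReal) * kbar y) := by
  have habs : Absorbent ℝ U := absorbent_nhds_zero (hU.mem_nhds h0)
  have hUnhds : U ∈ nhds (0:X) := hU.mem_nhds h0
  have hgc : Continuous (gauge U) := continuous_gauge hconv hUnhds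
  have hlt1 : ∀ {x : X}, x ∈ U → gauge U x < 1 := fun hx =>
    gauge_lt_one_of_mem_of_isOpen hU hx
  have hge1 : ∀ {x : X}, x ∉ U → 1 ≤ gauge U x := by
    intro x hx
    by_contra h
    exact hx (gauge_lt_one_subset_self hconv h0 habs (by simpa using lt_of_not_ge h))
  have hkbar_nonneg : ∀ y, (0 : EReal) ≤ kbar y := by
    intro y
    rw [hkbar y]
    split_ifs with hy
    · have := hlt1 hy
      exact_mod_cast div_nonneg (gauge_nonneg _) (by linarith)
    · exact le_top
  have hkbar_ne_bot : ∀ y, kbar y ≠ ⊥ := fun y =>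
    ne_bot_of_le_ne_bot (by simp) (hkbar_nonneg y)
  constructor
  · -- lower semicontinuity
    intro x M hM
    by_cases hx : x ∈ U
    · -- continuity point
      rw [hkbar x, if_pos hx] at hM
      induction M using EReal.rec with
      | bot =>
        filter_upwards with y
        exact bot_lt_iff_ne_bot.2 (hkbar_ne_bot y)
      | top => exact absurd hM (not_lt.2 le_top)
      | coe m =>
        have hcont : ContinuousAt (fun y => gauge U y / (1 - gauge U y)) x := by
          apply ContinuousAt.div (hgc.continuousAt) (by fun_prop)
          exact ne_of_gt (by linarith [hlt1 hx])
        have hm : m < gauge U x / (1 - gauge U x) := by exact_mod_cast hM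
        have h1 : ∀ᶠ y in nhds x, m < gauge U y / (1 - gauge U y) :=
          hcont.eventually_const_lt hm
        have h2 : ∀ᶠ y in nhds x, y ∈ U := hU.mem_nhds hx
        filter_upwards [h1, h2] with y hy1 hy2
        rw [hkbar y, if_pos hy2]
        exact_mod_cast hy1
    · -- boundary/outside point
      induction M using EReal.rec with
      | bot =>
        filter_upwards with y
        exact bot_lt_iff_ne_bot.2 (hkbar_ne_bot y)
      | top =>
        exact absurd hM (not_lt.2 le_top)
      | coe m =>
        set t0 : ℝ := max m 1 with ht0
        have ht0pos : 0 < t0 := lt_of_lt_of_le one_pos (le_max_right _ _)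
        set u0 : ℝ := t0 / (t0 + 1) with hu0
        have hu0lt : u0 < 1 := by
          rw [hu0, div_lt_one (by linarith)]; linarith
        have hfu0 : u0 / (1 - u0) = t0 := by
          rw [hu0]
          have h1 : (1:ℝ) - t0 / (t0 + 1) = 1 / (t0 + 1) := by field_simp; ring
          rw [h1]
          field_simp
        have hgx : u0 < gauge U x := lt_of_lt_of_le hu0lt (hge1 hx)
        have h1 : ∀ᶠ y in nhds x, u0 < gauge U y :=
          hgc.continuousAt.eventually_const_lt hgx
        filter_upwards [h1] with y hy1
        rw [hkbar y]
        split_ifs with hy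
        · have hlty : gauge U y < 1 := hlt1 hy
          have hlt : t0 < gauge U y / (1 - gauge U y) := by
            rw [← hfu0]
            exact aux_strict_mono hy1 hlty
          have hm : m < gauge U y / (1 - gauge U y) :=
            lt_of_le_of_lt (le_max_left _ _) hlt
          exact_mod_cast hm
        · exact EReal.coe_lt_top m
  · -- convexity
    intro x y a b ha hb hab
    rcases eq_or_lt_of_le ha with ha0 | ha0
    · have hb1 : b = 1 := by linarith
      subst hb1
      simp [← ha0, zero_smul, one_smul, zero_mul, one_mul, zero_add]
    rcases eq_or_lt_of_le hb with hb0 | hb0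
    · have ha1 : a = 1 := by linarith
      subst ha1
      simp [← hb0, zero_smul, one_smul, zero_mul, one_mul, add_zero]
    by_cases hx : x ∈ U
    · by_cases hy : y ∈ U
      · -- main case: everything is finite
        have hz : a • x + b • y ∈ U := hconv hx hy ha hb hab
        rw [hkbar x, hkbar y, hkbar _, if_pos hx, if_pos hy, if_pos hz]
        rw [← EReal.coe_mul, ← EReal.coe_mul, ← EReal.coe_add, EReal.coe_le_coe_iff]
        have hgz : gauge U (a • x + b • y) ≤ a * gauge U x + b * gauge U y := by
          calc gauge U (a • x + b • y) ≤ gauge U (a • x) + gauge U (b • y) :=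
                gauge_add_le hconv habs _ _
            _ = a * gauge U x + b * gauge U y := by
                rw [gauge_smul_of_nonneg ha, gauge_smul_of_nonneg hb, smul_eq_mul, smul_eq_mul]
        have hgx1 : gauge U x < 1 := hlt1 hx
        have hgy1 : gauge U y < 1 := hlt1 hy
        have habsum : a * gauge U x + b * gauge U y < 1 := aux_lt_one ha hb hab hgx1 hgy1
        calc gauge U (a • x + b • y) / (1 - gauge U (a • x + b • y))
            ≤ (a * gauge U x + b * gauge U y) / (1 - (a * gauge U x + b * gauge U y)) :=
              aux_mono hgz habsum
          _ ≤ a * (gauge U x / (1 - gauge U x)) + b * (gauge U y / (1 - gauge U y)) :=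
              aux_convex ha hb hab hgx1 hgy1
      · -- y ∉ U : RHS = ⊤
        have hbtop : (b : EReal) * kbar y = ⊤ := by
          rw [hkbar y, if_neg hy]
          exact EReal.coe_mul_top_of_pos hb0
        rw [hbtop, EReal.add_top_of_ne_bot]
        · exact le_top
        · exact ne_bot_of_le_ne_bot (by simp)
            (mul_nonneg (by exact_mod_cast ha) (hkbar_nonneg x))
    · -- x ∉ U : RHS = ⊤
      have hatop : (a : EReal) * kbar x = ⊤ := by
        rw [hkbar x, if_neg hx]
        exact EReal.coe_mul_top_of_pos ha0
      rw [hatop, EReal.top_add_of_ne_bot]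
      · exact le_top
      · exact ne_bot_of_le_ne_bot (by simp)
          (mul_nonneg (by exact_mod_cast hb) (hkbar_nonneg y))
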